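/- Brooks' Theorem for Independence Number: If G is a finite simple graph with maximum degree Δ(G) ≥ 3 that contains no clique on Δ(G)+1 vertices, then the independence number of G satisfies α(G) ≥ |G|/Δ(G); equivalently, Δ(G)·α(G) ≥ |G|. -/

import Mathlib

open SimpleGraph Finset

set_option linter.unusedSectionVars false
set_option maxHeartbeats 1000000

section Brooks
variable {V : Type*} [Fintype V] [DecidableEq V] (G : SimpleGraph V) [DecidableRel G.Adj]

/-- proper coloring on a finite vertex set -/
def ProperOn (A : Finset V) (f : V → Fin k) : Prop :=
  ∀ u ∈ A, ∀ w ∈ A, G.Adj u w → f u ≠ f w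

/-- reachability using only vertices of `B` -/
def ReachIn (B : Finset V) (u w : V) : Prop :=
  ∃ p : G.Walk u w, ∀ x ∈ p.support, x ∈ B

variable {G}

lemma ReachIn.refl {B : Finset V} {u : V} (h : u ∈ B) : ReachIn G B u u :=
  ⟨Walk.nil, by simp [h]⟩

lemma ReachIn.mem_left {B : Finset V} {u w : V} (h : ReachIn G B u w) : u ∈ B := by
  obtain ⟨p, hp⟩ := h; exact hp _ p.start_mem_support

lemma ReachIn.mem_right {B : Finset V} {u w : V} (h : ReachIn G B u w) : w ∈ B := by
  obtain ⟨p, hp⟩ := h; exact hp _ p.end_mem_support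

lemma ReachIn.symm {B : Finset V} {u w : V} (h : ReachIn G B u w) : ReachIn G B w u := by
  obtain ⟨p, hp⟩ := h
  exact ⟨p.reverse, by intro x hx; rw [Walk.support_reverse] at hx; exact hp x (List.mem_reverse.mp hx)⟩

lemma ReachIn.trans {B : Finset V} {u w z : V} (h : ReachIn G B u w) (h' : ReachIn G B w z) :
    ReachIn G B u z := by
  obtain ⟨p, hp⟩ := h; obtain ⟨q, hq⟩ := h'
  refine ⟨p.append q, ?_⟩
  intro x hx
  rw [Walk.mem_support_append_iff] at hx
  exact hx.elim (hp x) (hq x)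

lemma ReachIn.adj_right {B : Finset V} {u w z : V} (h : ReachIn G B u w) (ha : G.Adj w z)
    (hz : z ∈ B) : ReachIn G B u z :=
  h.trans ⟨Walk.cons ha Walk.nil, by simp [h.mem_right, hz]⟩

/-- walk-induction principle: a set containing `u` and closed under adjacency inside `B`
contains everything reachable from `u`. -/
lemma ReachIn.mem_of_closed {B : Finset V} {P : Finset V} {u w : V}
    (hu : u ∈ P) (hcl : ∀ s ∈ P, ∀ z ∈ B, G.Adj s z → z ∈ P)
    (h : ReachIn G B u w) : w ∈ P := by
  obtain ⟨p, hp⟩ := h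
  induction p with
  | nil => exact hu
  | cons ha q ih =>
    rename_i a b c
    refine ih ?_ (fun x hx => hp x (by simp [hx]))
    exact hcl a hu b (hp b (by simp)) ha

variable (G)

/-- distance within `B` -/
noncomputable def distIn (B : Finset V) (u w : V) : ℕ :=
  sInf {n | ∃ p : G.Walk u w, p.length = n ∧ ∀ x ∈ p.support, x ∈ B}

variable {G}

lemma distIn_exists {B : Finset V} {u w : V} (h : ReachIn G B u w) :
    ∃ p : G.Walk u w, p.length = distIn G B u w ∧ ∀ x ∈ p.support, x ∈ B := by
  obtain ⟨p, hp⟩ := h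
  have hne : {n | ∃ p : G.Walk u w, p.length = n ∧ ∀ x ∈ p.support, x ∈ B}.Nonempty :=
    ⟨p.length, p, rfl, hp⟩
  exact Nat.sInf_mem hne

lemma distIn_le {B : Finset V} {u w : V} (p : G.Walk u w) (hp : ∀ x ∈ p.support, x ∈ B) :
    distIn G B u w ≤ p.length :=
  Nat.sInf_le ⟨p, rfl, hp⟩

/-- from a vertex ≠ target, there is a strictly closer neighbour -/
lemma exists_closer {B : Finset V} {u b : V} (h : ReachIn G B u b) (hne : u ≠ b) :
    ∃ w, G.Adj u w ∧ ReachIn G B w b ∧ distIn G B w b < distIn G B u b := by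
  obtain ⟨p, hlen, hp⟩ := distIn_exists h
  cases p with
  | nil => exact absurd rfl hne
  | cons ha q =>
    rename_i w
    refine ⟨w, ha, ⟨q, fun x hx => hp x (by simp [hx])⟩, ?_⟩
    calc distIn G B w b ≤ q.length := distIn_le q (fun x hx => hp x (by simp [hx]))
      _ < q.length + 1 := Nat.lt_succ_self _
      _ = distIn G B u b := by rw [← hlen]; simp [Walk.length_cons]


/-- fresh color extraction -/
lemma exists_fresh {k : ℕ} (s : Finset (Fin k)) (h : s.card < k) : ∃ c : Fin k, c ∉ s := by
  have h2 : 0 < sᶜ.card := by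
    rw [Finset.card_compl, Fintype.card_fin]
    omega
  obtain ⟨c, hc⟩ := Finset.card_pos.mp h2
  exact ⟨c, Finset.mem_compl.mp hc⟩

/-- the greedy coloring step along distance ordering -/
lemma greedy {k : ℕ} (hk : 1 ≤ k) (hdeg : ∀ v, G.degree v ≤ k)
    {B : Finset V} {b : V} (hb : b ∈ B)
    (hreach : ∀ u ∈ B, ReachIn G B u b)
    {a c : V} (haB : a ∉ B) (hcB : c ∉ B) (hac : a ≠ c) (hnadj : ¬ G.Adj a c)
    (hba : G.Adj b a) (hbc : G.Adj b c) :
    ∃ f : V → Fin k, f a = f c ∧ ProperOn G (B ∪ {a, c}) f := by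
  classical
  -- strong induction on colored part C ⊆ B with invariant: dist of outside ≤ dist of inside
  suffices h : ∀ C : Finset V, C ⊆ B →
      (∀ w ∈ B, w ∉ C → ∀ u ∈ C, distIn G B w b ≤ distIn G B u b) →
      ∃ f : V → Fin k, f a = f c ∧ ProperOn G (C ∪ {a, c}) f by
    exact h B le_rfl (fun w hw hwn u hu => absurd hw hwn)
  intro C
  induction C using Finset.strongInduction with
  | _ C ih =>
    intro hCB hinv
    rcases C.eq_empty_or_nonempty with rfl | hCne
    · refine ⟨fun _ => ⟨0, hk⟩, rfl, ?_⟩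
      intro u hu w hw hadj
      simp only [empty_union, mem_insert, mem_singleton] at hu hw
      exfalso
      rcases hu with rfl | rfl <;> rcases hw with rfl | rfl
      · exact G.irrefl hadj
      · exact hnadj hadj
      · exact hnadj hadj.symm
      · exact G.irrefl hadj
    · -- pick min-dist element of C
      obtain ⟨u₀, hu₀C, hu₀min⟩ := C.exists_min_image (fun x => distIn G B x b) hCne
      have hu₀B : u₀ ∈ B := hCB hu₀C
      have hinv' : ∀ w ∈ B, w ∉ C.erase u₀ → ∀ u ∈ C.erase u₀, distIn G B w b ≤ distIn G B u b := by
        intro w hwB hwn u hu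
        by_cases hwC : w ∈ C
        · rcases eq_or_ne w u₀ with rfl | hne
          · exact hu₀min u (mem_of_mem_erase hu)
          · exact absurd (mem_erase.mpr ⟨hne, hwC⟩) hwn
        · exact hinv w hwB hwC u (mem_of_mem_erase hu)
      obtain ⟨f₀, hfac, hf₀⟩ := ih (C.erase u₀) (erase_ssubset hu₀C) ((erase_subset _ _).trans hCB) hinv'
      -- colored so far
      set colored : Finset V := (C.erase u₀) ∪ {a, c} with hcoldef
      have hucol : u₀ ∉ colored := by
        simp only [hcoldef, mem_union, mem_erase, mem_insert, mem_singleton]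
        push_neg
        exact ⟨fun h _ => absurd rfl h, fun h => haB (h ▸ hu₀B), fun h => hcB (h ▸ hu₀B)⟩
      set nbrsCol : Finset V := colored.filter (G.Adj u₀) with hnbrdef
      -- the color bound
      have hbound : (nbrsCol.image f₀).card < k := by
        by_cases hub : u₀ = b
        · -- b-case: C = B, a and c are neighbours with equal colors
          subst hub
          have haN : a ∈ nbrsCol := by
            simp [hnbrdef, hcoldef, hba]
          have hcN : c ∈ nbrsCol := by
            simp [hnbrdef, hcoldef, hbc]
          have himg : nbrsCol.image f₀ ⊆ insert (f₀ a) ((nbrsCol.erase a |>.erase c).image f₀) := by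
            intro x hx
            obtain ⟨y, hy, rfl⟩ := Finset.mem_image.mp hx
            rcases eq_or_ne y a with rfl | hya
            · exact mem_insert_self _ _
            rcases eq_or_ne y c with rfl | hyc
            · rw [← hfac]; exact mem_insert_self _ _
            · exact mem_insert_of_mem (Finset.mem_image_of_mem _ (by
                exact Finset.mem_erase.mpr ⟨hyc, Finset.mem_erase.mpr ⟨hya, hy⟩⟩))
          have h1 : (nbrsCol.erase a |>.erase c).card ≤ G.degree u₀ - 2 := by
            have hsub : nbrsCol ⊆ G.neighborFinset u₀ := by
              intro x hx
              simp only [hnbrdef, mem_filter] at hx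
              exact (G.mem_neighborFinset _ _).mpr hx.2
            have hcea : c ∈ nbrsCol.erase a := Finset.mem_erase.mpr ⟨hac.symm, hcN⟩
            have hle : (nbrsCol.erase a |>.erase c).card + 2 ≤ nbrsCol.card := by
              have h2 := Finset.card_erase_add_one hcea
              have h3 := Finset.card_erase_add_one haN
              omega
            have h4 : nbrsCol.card ≤ G.degree u₀ := le_trans (Finset.card_le_card hsub) (le_of_eq (G.card_neighborFinset_eq_degree u₀))
            omega
          have h5 : G.degree u₀ ≤ k := hdeg u₀
          have h6 : 2 ≤ G.degree u₀ := by
            have hss : ({a, c} : Finset V) ⊆ G.neighborFinset u₀ := by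
              intro x hx
              simp only [mem_insert, mem_singleton] at hx
              rcases hx with rfl | rfl <;> simp [G.mem_neighborFinset, hba, hbc]
            calc 2 = ({a, c} : Finset V).card := by rw [Finset.card_insert_of_notMem (by simpa using hac), Finset.card_singleton]
              _ ≤ _ := Finset.card_le_card hss
              _ = G.degree u₀ := G.card_neighborFinset_eq_degree u₀
          calc (nbrsCol.image f₀).card ≤ (insert (f₀ a) ((nbrsCol.erase a |>.erase c).image f₀)).card := Finset.card_le_card himg
            _ ≤ ((nbrsCol.erase a |>.erase c).image f₀).card + 1 := Finset.card_insert_le _ _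
            _ ≤ (nbrsCol.erase a |>.erase c).card + 1 := by
                have := Finset.card_image_le (f := f₀) (s := (nbrsCol.erase a |>.erase c)); omega
            _ ≤ (G.degree u₀ - 2) + 1 := by omega
            _ < k := by omega
        · -- non-b case: there is an uncolored closer neighbour
          obtain ⟨w, hadj, hwreach, hwlt⟩ := exists_closer (hreach u₀ hu₀B) hub
          have hwB : w ∈ B := by
            obtain ⟨p, hp⟩ := hwreach; exact hp _ p.start_mem_support
          have hwnc : w ∉ colored := by
            simp only [hcoldef, mem_union, mem_erase, mem_insert, mem_singleton]
            push_neg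
            refine ⟨fun _ hwC => ?_, fun h => haB (h ▸ hwB), fun h => hcB (h ▸ hwB)⟩
            exact absurd (hu₀min w hwC) (by omega)
          have hsub : nbrsCol ⊆ (G.neighborFinset u₀).erase w := by
            intro x hx
            simp only [hnbrdef, mem_filter] at hx
            refine Finset.mem_erase.mpr ⟨?_, (G.mem_neighborFinset _ _).mpr hx.2⟩
            rintro rfl; exact hwnc hx.1
          have hwn : w ∈ G.neighborFinset u₀ := (G.mem_neighborFinset _ _).mpr hadj
          calc (nbrsCol.image f₀).card ≤ nbrsCol.card := Finset.card_image_le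
            _ ≤ ((G.neighborFinset u₀).erase w).card := Finset.card_le_card hsub
            _ = G.degree u₀ - 1 := by rw [Finset.card_erase_of_mem hwn, G.card_neighborFinset_eq_degree]
            _ < k := by have h1 := hdeg u₀; have h2 : 0 < G.degree u₀ := by
                          rw [← G.card_neighborFinset_eq_degree]; exact Finset.card_pos.mpr ⟨w, hwn⟩
                        omega
      obtain ⟨col, hcol⟩ := exists_fresh _ hbound
      refine ⟨Function.update f₀ u₀ col, ?_, ?_⟩
      · rw [Function.update_of_ne (by rintro rfl; exact haB hu₀B), Function.update_of_ne (by rintro rfl; exact hcB hu₀B)]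
        exact hfac
      · have hCcol : C ∪ {a, c} = insert u₀ colored := by
          simp only [hcoldef]
          rw [← Finset.insert_union, Finset.insert_erase hu₀C]
        rw [hCcol]
        intro u hu w hw hadj
        rcases Finset.mem_insert.mp hu with rfl | huc
        · rcases Finset.mem_insert.mp hw with rfl | hwc
          · exact absurd hadj (G.irrefl)
          · rw [Function.update_self, Function.update_of_ne (by rintro rfl; exact hucol hwc)]
            intro heq
            exact hcol (heq ▸ Finset.mem_image_of_mem f₀ (Finset.mem_filter.mpr ⟨hwc, hadj⟩))
        · rcases Finset.mem_insert.mp hw with rfl | hwc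
          · rw [Function.update_self, Function.update_of_ne (by rintro rfl; exact hucol huc)]
            intro heq
            exact hcol (heq ▸ Finset.mem_image_of_mem f₀ (Finset.mem_filter.mpr ⟨huc, hadj.symm⟩))
          · rw [Function.update_of_ne (by rintro rfl; exact hucol huc),
               Function.update_of_ne (by rintro rfl; exact hucol hwc)]
            exact hf₀ u huc w hwc hadj


lemma walk_support_reach {B : Finset V} {u v : V} (p : G.Walk u v)
    (hp : ∀ z ∈ p.support, z ∈ B) : ∀ z ∈ p.support, ReachIn G B u z := by
  induction p with
  | nil =>
    intro z hz
    rw [Walk.support_nil, List.mem_singleton] at hz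
    subst hz
    exact ReachIn.refl (hp _ (by simp))
  | @cons a b c h q ih =>
    intro z hz
    rw [Walk.support_cons, List.mem_cons] at hz
    rcases hz with rfl | hz'
    · exact ReachIn.refl (hp _ (by simp))
    · have hbB : b ∈ B := hp b (by
        rw [Walk.support_cons]
        exact List.mem_cons_of_mem _ q.start_mem_support)
      have h1 : ReachIn G B a b := (ReachIn.refl (hp a (by simp))).adj_right h hbB
      exact h1.trans (ih (fun t ht => hp t (by simp [Walk.support_cons, ht])) z hz')

lemma reach_restrict {B : Finset V} {u v : V} [DecidablePred (ReachIn G B u)]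
    (h : ReachIn G B u v) :
    ReachIn G (B.filter (fun z => ReachIn G B u z)) u v := by
  obtain ⟨p, hp⟩ := h
  exact ⟨p, fun z hz => Finset.mem_filter.mpr ⟨hp z hz, walk_support_reach p hp z hz⟩⟩


variable (G) in
def SepSet (A : Finset V) (x y : V) (S : Finset V) : Prop :=
  x ∈ A ∧ y ∈ A ∧ x ≠ y ∧ S.Nonempty ∧ S ⊆ A \ {x, y} ∧ S ≠ A \ {x, y} ∧
    ∀ s ∈ S, ∀ z ∈ A, G.Adj s z → z ∈ S ∨ z = x ∨ z = y


lemma twocut_case {k : ℕ} (hk : 3 ≤ k) (hdeg : ∀ v, G.degree v ≤ k)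
    {A : Finset V}
    (hfullA : ∀ v ∈ A, k ≤ (A.filter (G.Adj v)).card)
    (hnocut : ∀ v ∈ A, ∀ u ∈ A.erase v, ∀ w ∈ A.erase v, ReachIn G (A.erase v) u w)
    {x₀ y₀ : V} {S₀ : Finset V} (hS₀ : SepSet G A x₀ y₀ S₀) :
    ∃ f : V → Fin k, ProperOn G A f := by
  classical
  -- minimal separated set
  obtain ⟨S, hSmem, hSmin⟩ := Finset.exists_min_image
    ((univ : Finset (Finset V)).filter (fun S => ∃ x y, SepSet G A x y S))
    Finset.card ⟨S₀, Finset.mem_filter.mpr ⟨Finset.mem_univ _, x₀, y₀, hS₀⟩⟩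
  obtain ⟨x, y, hSep⟩ := (Finset.mem_filter.mp hSmem).2
  obtain ⟨hxA, hyA, hxy, hSne, hSsub, hSneq, hScl⟩ := hSep
  have hmin : ∀ (x' y' : V) (S' : Finset V), SepSet G A x' y' S' → S.card ≤ S'.card := by
    intro x' y' S' hS'
    exact hSmin S' (Finset.mem_filter.mpr ⟨Finset.mem_univ _, x', y', hS'⟩)
  -- the complementary side
  set Sc : Finset V := (A \ {x, y}) \ S with hScdef
  have hScne : Sc.Nonempty := by
    obtain ⟨z, hz, hzn⟩ := Finset.exists_of_ssubset (Finset.ssubset_iff_subset_ne.mpr ⟨hSsub, hSneq⟩)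
    exact ⟨z, Finset.mem_sdiff.mpr ⟨hz, hzn⟩⟩
  have hSS : ∀ s ∈ S, s ∈ A ∧ s ≠ x ∧ s ≠ y := by
    intro s hs
    have := hSsub hs
    rw [Finset.mem_sdiff, Finset.mem_insert, Finset.mem_singleton] at this
    push_neg at this
    exact ⟨this.1, this.2.1, this.2.2⟩
  have hScS : ∀ s ∈ Sc, s ∈ A ∧ s ≠ x ∧ s ≠ y ∧ s ∉ S := by
    intro s hs
    rw [hScdef, Finset.mem_sdiff, Finset.mem_sdiff, Finset.mem_insert, Finset.mem_singleton] at hs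
    push_neg at hs
    exact ⟨hs.1.1, hs.1.2.1, hs.1.2.2, hs.2⟩
  have hSccl : ∀ s ∈ Sc, ∀ z ∈ A, G.Adj s z → z ∈ Sc ∨ z = x ∨ z = y := by
    intro s hs z hz hadj
    rcases eq_or_ne z x with rfl | hzx
    · exact Or.inr (Or.inl rfl)
    rcases eq_or_ne z y with rfl | hzy
    · exact Or.inr (Or.inr rfl)
    refine Or.inl ?_
    rw [hScdef, Finset.mem_sdiff, Finset.mem_sdiff, Finset.mem_insert, Finset.mem_singleton]
    refine ⟨⟨hz, by push_neg; exact ⟨hzx, hzy⟩⟩, ?_⟩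
    intro hzS
    rcases hScl z hzS s (hScS s hs).1 hadj.symm with h | h | h
    · exact (hScS s hs).2.2.2 h
    · exact (hScS s hs).2.1 h
    · exact (hScS s hs).2.2.1 h
  -- x has a neighbour in S
  have haex : ∃ aa ∈ S, G.Adj x aa := by
    by_contra hnone
    push_neg at hnone
    obtain ⟨s₁, hs₁⟩ := hSne
    obtain ⟨z₀, hz₀⟩ := hScne
    have hs₁e : s₁ ∈ A.erase y := Finset.mem_erase.mpr ⟨(hSS s₁ hs₁).2.2, (hSS s₁ hs₁).1⟩
    have hz₀e : z₀ ∈ A.erase y := Finset.mem_erase.mpr ⟨(hScS z₀ hz₀).2.2.1, (hScS z₀ hz₀).1⟩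
    have hr := hnocut y hyA s₁ hs₁e z₀ hz₀e
    have : z₀ ∈ S := by
      refine ReachIn.mem_of_closed hs₁ ?_ hr
      intro s hs z hz hadj
      rcases hScl s hs z (Finset.mem_of_mem_erase hz) hadj with h | h | h
      · exact h
      · exact absurd hadj.symm (h ▸ hnone s hs)
      · exact absurd (Finset.mem_erase.mp hz).1 (by simp [h])
    exact (hScS z₀ hz₀).2.2.2 this
  -- x has a neighbour in Sc
  have hcex : ∃ cc ∈ Sc, G.Adj x cc := by
    by_contra hnone
    push_neg at hnone
    obtain ⟨s₁, hs₁⟩ := hSne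
    obtain ⟨z₀, hz₀⟩ := hScne
    have hs₁e : s₁ ∈ A.erase y := Finset.mem_erase.mpr ⟨(hSS s₁ hs₁).2.2, (hSS s₁ hs₁).1⟩
    have hz₀e : z₀ ∈ A.erase y := Finset.mem_erase.mpr ⟨(hScS z₀ hz₀).2.2.1, (hScS z₀ hz₀).1⟩
    have hr := hnocut y hyA z₀ hz₀e s₁ hs₁e
    have : s₁ ∈ Sc := by
      refine ReachIn.mem_of_closed hz₀ ?_ hr
      intro s hs z hz hadj
      rcases hSccl s hs z (Finset.mem_of_mem_erase hz) hadj with h | h | h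
      · exact h
      · exact absurd hadj.symm (h ▸ hnone s hs)
      · exact absurd (Finset.mem_erase.mp hz).1 (by simp [h])
    exact (hScS s₁ this).2.2.2 hs₁
  obtain ⟨aa, haaS, haax⟩ := haex
  obtain ⟨cc, hccSc, hccx⟩ := hcex
  have haaA : aa ∈ A := (hSS aa haaS).1
  have hccA : cc ∈ A := (hScS cc hccSc).1
  have haacc : aa ≠ cc := fun h => (hScS cc hccSc).2.2.2 (h ▸ haaS)
  have hnadj : ¬ G.Adj aa cc := by
    intro hadj
    rcases hScl aa haaS cc hccA hadj with h | h | h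
    · exact (hScS cc hccSc).2.2.2 h
    · exact (hScS cc hccSc).2.1 h
    · exact (hScS cc hccSc).2.2.1 h
  set B' : Finset V := A \ {aa, cc} with hB'def
  have hmemB' : ∀ z, z ∈ B' ↔ z ∈ A ∧ z ≠ aa ∧ z ≠ cc := by
    intro z
    rw [hB'def, Finset.mem_sdiff, Finset.mem_insert, Finset.mem_singleton]
    tauto
  have hxB' : x ∈ B' := (hmemB' x).mpr
    ⟨hxA, fun h => (hSS aa haaS).2.1 h.symm, fun h => (hScS cc hccSc).2.1 h.symm⟩
  have hyB' : y ∈ B' := (hmemB' y).mpr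
    ⟨hyA, fun h => (hSS aa haaS).2.2 h.symm, fun h => (hScS cc hccSc).2.2.1 h.symm⟩
  have haaB' : aa ∉ B' := fun h => ((hmemB' aa).mp h).2.1 rfl
  have hccB' : cc ∉ B' := fun h => ((hmemB' cc).mp h).2.2 rfl
  -- dichotomy: every vertex of B' reaches x or y within B'
  have hdich : ∀ w ∈ B', ReachIn G B' w x ∨ ReachIn G B' w y := by
    intro w hwB
    by_contra hneither
    push_neg at hneither
    obtain ⟨hnx, hny⟩ := hneither
    set Rw : Finset V := B'.filter (fun z => ReachIn G B' w z) with hRwdef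
    have hwRw : w ∈ Rw := Finset.mem_filter.mpr ⟨hwB, ReachIn.refl hwB⟩
    have hxRw : x ∉ Rw := fun h => hnx (Finset.mem_filter.mp h).2
    have hyRw : y ∉ Rw := fun h => hny (Finset.mem_filter.mp h).2
    have hRwcl : ∀ r ∈ Rw, ∀ z ∈ B', G.Adj r z → z ∈ Rw := by
      intro r hr z hz hadj
      exact Finset.mem_filter.mpr ⟨hz, ((Finset.mem_filter.mp hr).2).adj_right hadj hz⟩
    have haux : ∀ (d e : V), e ∈ A → w ≠ e → x ≠ e →
        (∀ z, z ∈ A → z ≠ d → z ≠ e → z ∈ B') →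
        (∀ r ∈ Rw, ¬ G.Adj r d) → False := by
      intro d e heA hwe' hxe' hB'mem hnoadj
      have hcl : ∀ r ∈ Rw, ∀ z ∈ A.erase e, G.Adj r z → z ∈ Rw := by
        intro r hr z hz hadj
        rcases eq_or_ne z d with rfl | hzd
        · exact absurd hadj (hnoadj r hr)
        · exact hRwcl r hr z
            (hB'mem z (Finset.mem_of_mem_erase hz) hzd (Finset.mem_erase.mp hz).1) hadj
      exact hxRw (ReachIn.mem_of_closed hwRw hcl
        (hnocut e heA w (Finset.mem_erase.mpr ⟨hwe', ((hmemB' w).mp hwB).1⟩)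
          x (Finset.mem_erase.mpr ⟨hxe', hxA⟩)))
    by_cases hra : ∃ r ∈ Rw, G.Adj r aa
    · by_cases hrc : ∃ r ∈ Rw, G.Adj r cc
      · obtain ⟨r₁, hr₁, hr₁a⟩ := hra
        obtain ⟨r₂, hr₂, hr₂c⟩ := hrc
        have hr₁S : r₁ ∈ S := by
          rcases hScl aa haaS r₁ (((hmemB' r₁).mp (Finset.mem_filter.mp hr₁).1).1) hr₁a.symm
            with h | h | h
          · exact h
          · exact absurd h (by rintro rfl; exact hxRw hr₁)
          · exact absurd h (by rintro rfl; exact hyRw hr₁)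
        have hr₂Sc : r₂ ∈ Sc := by
          rcases hSccl cc hccSc r₂ (((hmemB' r₂).mp (Finset.mem_filter.mp hr₂).1).1) hr₂c.symm
            with h | h | h
          · exact h
          · exact absurd h (by rintro rfl; exact hxRw hr₂)
          · exact absurd h (by rintro rfl; exact hyRw hr₂)
        have hWw1 : ReachIn G Rw w r₁ := reach_restrict (Finset.mem_filter.mp hr₁).2
        have hWw2 : ReachIn G Rw w r₂ := reach_restrict (Finset.mem_filter.mp hr₂).2
        have hW : ReachIn G Rw r₁ r₂ := hWw1.symm.trans hWw2
        have hr₂S : r₂ ∈ S := by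
          refine ReachIn.mem_of_closed hr₁S ?_ hW
          intro s hs z hz hadj
          rcases hScl s hs z (((hmemB' z).mp (Finset.mem_filter.mp hz).1).1) hadj with h | h | h
          · exact h
          · exact absurd h (by rintro rfl; exact hxRw hz)
          · exact absurd h (by rintro rfl; exact hyRw hz)
        exact (hScS r₂ hr₂Sc).2.2.2 hr₂S
      · push_neg at hrc
        exact haux cc aa haaA ((hmemB' w).mp hwB).2.1
          (fun h => (hSS aa haaS).2.1 h.symm)
          (fun z hz h1 h2 => (hmemB' z).mpr ⟨hz, h2, h1⟩) hrc
    · push_neg at hra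
      exact haux aa cc hccA ((hmemB' w).mp hwB).2.2
        (fun h => (hScS cc hccSc).2.1 h.symm)
        (fun z hz h1 h2 => (hmemB' z).mpr ⟨hz, h1, h2⟩) hra
  -- y reaches x
  have hyx : ReachIn G B' y x := by
    by_contra hnyx
    have hUgen : ∀ (p q : V), p ∈ A → p ∈ B' → q ∈ B' →
        (∀ u ∈ S, u ≠ p) → cc ≠ p →
        (∀ z, z = x ∨ z = y → z = p ∨ z = q) →
        (¬ ReachIn G B' p q) → p ≠ aa →
        ∀ s, s ∈ B'.filter (fun z => ReachIn G B' p z) → s ∈ S → False := by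
      intro p q hpA hpB' hqB' hSavoid hccp htrans hnpq hpaa s hsRp hsS
      set U : Finset V := (B'.filter (fun z => ReachIn G B' p z)) ∩ S with hUdef
      have hU : SepSet G A p aa U := by
        refine ⟨hpA, haaA, hpaa, ⟨s, Finset.mem_inter.mpr ⟨hsRp, hsS⟩⟩, ?_, ?_, ?_⟩
        · intro u hu
          obtain ⟨huRp, huS⟩ := Finset.mem_inter.mp hu
          have huB' := (Finset.mem_filter.mp huRp).1
          refine Finset.mem_sdiff.mpr ⟨(hSS u huS).1, ?_⟩
          simp only [Finset.mem_insert, Finset.mem_singleton]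
          push_neg
          exact ⟨hSavoid u huS, ((hmemB' u).mp huB').2.1⟩
        · intro heq
          have hccin : cc ∈ A \ ({p, aa} : Finset V) := by
            refine Finset.mem_sdiff.mpr ⟨hccA, ?_⟩
            simp only [Finset.mem_insert, Finset.mem_singleton]
            push_neg
            exact ⟨hccp, Ne.symm haacc⟩
          rw [← heq] at hccin
          exact (hScS cc hccSc).2.2.2 (Finset.mem_inter.mp hccin).2
        · intro u hu z hz hadj
          obtain ⟨huRp, huS⟩ := Finset.mem_inter.mp hu
          rcases hScl u huS z hz hadj with h | h | h
          · rcases eq_or_ne z aa with rfl | hzaa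
            · exact Or.inr (Or.inr rfl)
            · have hzB' : z ∈ B' := (hmemB' z).mpr
                ⟨hz, hzaa, fun hzc => (hScS cc hccSc).2.2.2 (hzc ▸ h)⟩
              exact Or.inl (Finset.mem_inter.mpr
                ⟨Finset.mem_filter.mpr ⟨hzB',
                  ((Finset.mem_filter.mp huRp).2).adj_right hadj hzB'⟩, h⟩)
          · rcases htrans z (Or.inl h) with h2 | h2
            · exact Or.inr (Or.inl h2)
            · exfalso
              have hzB' : z ∈ B' := h2 ▸ hqB'
              exact hnpq (h2 ▸ (((Finset.mem_filter.mp huRp).2).adj_right hadj hzB'))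
          · rcases htrans z (Or.inr h) with h2 | h2
            · exact Or.inr (Or.inl h2)
            · exfalso
              have hzB' : z ∈ B' := h2 ▸ hqB'
              exact hnpq (h2 ▸ (((Finset.mem_filter.mp huRp).2).adj_right hadj hzB'))
      have hcard := hmin p aa U hU
      have hUsub : U ⊆ S := Finset.inter_subset_right
      have haaU : aa ∉ U := fun h =>
        haaB' ((Finset.mem_filter.mp (Finset.mem_inter.mp h).1).1)
      have hUS : U ⊂ S := (Finset.ssubset_iff_of_subset hUsub).mpr ⟨aa, haaS, haaU⟩
      have := Finset.card_lt_card hUS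
      omega
    have hSsub2 : ∀ s ∈ S, s = aa := by
      intro s hs
      by_contra hsaa
      have hsB' : s ∈ B' := (hmemB' s).mpr
        ⟨(hSS s hs).1, hsaa, fun h => (hScS cc hccSc).2.2.2 (h ▸ hs)⟩
      rcases hdich s hsB' with h | h
      · exact hUgen x y hxA hxB' hyB' (fun u hu => (hSS u hu).2.1)
          (hScS cc hccSc).2.1 (fun z hz => hz)
          (fun hr => hnyx hr.symm) (fun hh => (hSS aa haaS).2.1 hh.symm)
          s (Finset.mem_filter.mpr ⟨hsB', h.symm⟩) hs
      · exact hUgen y x hyA hyB' hxB' (fun u hu => (hSS u hu).2.2)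
          (hScS cc hccSc).2.2.1 (fun z hz => hz.symm)
          hnyx (fun hh => (hSS aa haaS).2.2 hh.symm)
          s (Finset.mem_filter.mpr ⟨hsB', h.symm⟩) hs
    have hfil : A.filter (G.Adj aa) ⊆ {x, y} := by
      intro z hz
      obtain ⟨hzA, hadj⟩ := Finset.mem_filter.mp hz
      rcases hScl aa haaS z hzA hadj with h | h | h
      · exfalso
        have h2 := hSsub2 z h
        subst h2
        exact G.irrefl hadj
      · simp [h]
      · simp [h]
    have h1 := hfullA aa haaA
    have h2 : (A.filter (G.Adj aa)).card ≤ 2 :=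
      le_trans (Finset.card_le_card hfil) (le_trans (Finset.card_insert_le _ _) (by simp))
    omega
  -- all of B' reaches x
  have hreachx : ∀ u ∈ B', ReachIn G B' u x := by
    intro u hu
    rcases hdich u hu with h | h
    · exact h
    · exact h.trans hyx
  obtain ⟨f, _, hf⟩ := greedy (by omega : 1 ≤ k) hdeg hxB' hreachx haaB' hccB' haacc hnadj haax hccx
  have hunion : B' ∪ {aa, cc} = A := by
    rw [hB'def]
    apply Finset.sdiff_union_of_subset
    intro z hz
    rcases Finset.mem_insert.mp hz with rfl | hz'
    · exact haaA
    · rw [Finset.mem_singleton] at hz'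
      exact hz' ▸ hccA
  rw [hunion] at hf
  exact ⟨f, hf⟩


/-- extension of a coloring at a low-degree vertex -/
lemma extend_coloring {k : ℕ} {A : Finset V} {v : V} (hv : v ∈ A)
    (hlow : (((A.erase v)).filter (G.Adj v)).card < k)
    (h : ∃ f : V → Fin k, ProperOn G (A.erase v) f) :
    ∃ f : V → Fin k, ProperOn G A f := by
  classical
  obtain ⟨f₀, hf₀⟩ := h
  have hm : (((A.erase v).filter (G.Adj v)).image f₀).card < k :=
    lt_of_le_of_lt Finset.card_image_le hlow
  have h2 : 0 < (((A.erase v).filter (G.Adj v)).image f₀)ᶜ.card := by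
    rw [Finset.card_compl, Fintype.card_fin]; omega
  obtain ⟨col, hcol'⟩ := Finset.card_pos.mp h2
  have hcol : col ∉ ((A.erase v).filter (G.Adj v)).image f₀ := Finset.mem_compl.mp hcol'
  refine ⟨Function.update f₀ v col, ?_⟩
  have hA : A = insert v (A.erase v) := (Finset.insert_erase hv).symm
  rw [hA]
  intro u hu w hw hadj
  have hvne : v ∉ A.erase v := Finset.notMem_erase v A
  rcases Finset.mem_insert.mp hu with rfl | huc
  · rcases Finset.mem_insert.mp hw with rfl | hwc
    · exact absurd hadj G.irrefl
    · rw [Function.update_self, Function.update_of_ne (by rintro rfl; exact hvne hwc)]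
      intro heq
      exact hcol (heq ▸ Finset.mem_image_of_mem f₀ (Finset.mem_filter.mpr ⟨hwc, hadj⟩))
  · rcases Finset.mem_insert.mp hw with rfl | hwc
    · rw [Function.update_self, Function.update_of_ne (by rintro rfl; exact hvne huc)]
      intro heq
      exact hcol (heq ▸ Finset.mem_image_of_mem f₀ (Finset.mem_filter.mpr ⟨huc, hadj.symm⟩))
    · rw [Function.update_of_ne (by rintro rfl; exact hvne huc),
         Function.update_of_ne (by rintro rfl; exact hvne hwc)]
      exact hf₀ u huc w hwc hadj

/-- Brooks' theorem, coloring form, by strong induction on the vertex set. -/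
theorem brooks_coloring {k : ℕ} (hk : 3 ≤ k) (hdeg : ∀ v, G.degree v ≤ k)
    (hcf : G.CliqueFree (k + 1)) :
    ∀ A : Finset V, ∃ f : V → Fin k, ProperOn G A f := by
  classical
  intro A
  induction A using Finset.strongInduction with
  | _ A ih =>
  rcases A.eq_empty_or_nonempty with rfl | hAne
  · exact ⟨fun _ => ⟨0, by omega⟩, fun u hu => absurd hu (Finset.notMem_empty u)⟩
  by_cases hlow : ∃ v ∈ A, (A.filter (G.Adj v)).card < k
  · -- low degree vertex: extend
    obtain ⟨v, hv, hvd⟩ := hlow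
    refine extend_coloring hv (lt_of_le_of_lt (Finset.card_le_card ?_) hvd) (ih _ (Finset.erase_ssubset hv))
    exact Finset.filter_subset_filter _ (Finset.erase_subset _ _)
  push_neg at hlow
  -- full-degree case: every v ∈ A has all k neighbours inside A
  have hfull : ∀ v ∈ A, G.neighborFinset v ⊆ A ∧ G.degree v = k := by
    intro v hv
    have h1 : A.filter (G.Adj v) ⊆ G.neighborFinset v := by
      intro z hz; rw [G.mem_neighborFinset]; exact (Finset.mem_filter.mp hz).2
    have h2 : (G.neighborFinset v).card ≤ k := by
      rw [G.card_neighborFinset_eq_degree]; exact hdeg v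
    have h3 : A.filter (G.Adj v) = G.neighborFinset v :=
      Finset.eq_of_subset_of_card_le h1 (le_trans h2 (hlow v hv))
    constructor
    · rw [← h3]; exact Finset.filter_subset _ _
    · have h4 := hlow v hv
      have h5 := hdeg v
      rw [h3, G.card_neighborFinset_eq_degree] at h4
      omega
  obtain ⟨v₀, hv₀⟩ := hAne
  set C : Finset V := A.filter (fun w => ReachIn G A v₀ w) with hCdef
  have hv₀C : v₀ ∈ C := Finset.mem_filter.mpr ⟨hv₀, ReachIn.refl hv₀⟩
  have hCsub : C ⊆ A := Finset.filter_subset _ _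
  by_cases hCA : C = A
  · -- connected case
    -- A is not a clique
    have hnotclique : ∃ x ∈ A, ∃ y ∈ A, x ≠ y ∧ ¬ G.Adj x y := by
      by_contra hcl
      push_neg at hcl
      refine hcf (insert v₀ (G.neighborFinset v₀)) ⟨?_, ?_⟩
      · intro p hp q hq hpq
        have hsub : (insert v₀ (G.neighborFinset v₀) : Finset V) ⊆ A := by
          intro z hz
          rcases Finset.mem_insert.mp hz with rfl | hz'
          · exact hv₀
          · exact (hfull v₀ hv₀).1 hz'
        have hp' : p ∈ A := hsub hp
        have hq' : q ∈ A := hsub hq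
        exact hcl p hp' q hq' hpq
      · rw [Finset.card_insert_of_notMem (by simp), G.card_neighborFinset_eq_degree,
          (hfull v₀ hv₀).2]
    obtain ⟨x, hx, y, hy, hxy, hnxy⟩ := hnotclique
    have hreachA : ∀ u ∈ A, ∀ w ∈ A, ReachIn G A u w := by
      intro u hu w hw
      have hu' : u ∈ C := hCA ▸ hu
      have hw' : w ∈ C := hCA ▸ hw
      exact ((Finset.mem_filter.mp hu').2.symm).trans (Finset.mem_filter.mp hw').2
    -- induced triple a-b-c
    have htriple : ∃ a ∈ A, ∃ b ∈ A, ∃ c ∈ A, G.Adj a b ∧ G.Adj b c ∧ ¬ G.Adj a c ∧ a ≠ c := by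
      obtain ⟨p, hplen, hpsup⟩ := distIn_exists (hreachA x hx y hy)
      cases p with
      | nil => exact absurd rfl hxy
      | cons ha q =>
        rename_i w
        cases q with
        | nil => exact absurd ha hnxy
        | cons hb r =>
          rename_i w₂
          refine ⟨x, hx, w, hpsup w (by simp), w₂, hpsup w₂ (by simp), ha, hb, ?_, ?_⟩
          · intro hadj
            have hshort := distIn_le (G := G) (B := A) (Walk.cons hadj r)
              (fun z hz => by
                rcases (by simpa using hz : z = x ∨ z ∈ r.support) with rfl | hz'
                · exact hx
                · exact hpsup z (by simp [hz']))
            rw [← hplen] at hshort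
            simp [Walk.length_cons] at hshort
          · rintro rfl
            have hshort := distIn_le (G := G) (B := A) r
              (fun z hz => hpsup z (by simp [hz]))
            rw [← hplen] at hshort
            simp [Walk.length_cons] at hshort
    obtain ⟨a, ha, b, hb, c, hc, hab, hbc, hnac, hac⟩ := htriple
    by_cases hcut : ∃ v ∈ A, ∃ u ∈ A.erase v, ∃ w ∈ A.erase v, ¬ ReachIn G (A.erase v) u w
    · -- cut vertex: split into lobes
      obtain ⟨v, hv, u, hu, w, hw, hnr⟩ := hcut
      set D : Finset V := (A.erase v).filter (fun z => ReachIn G (A.erase v) u z) with hDdef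
      have hDsub : D ⊆ A.erase v := Finset.filter_subset _ _
      have huD : u ∈ D := Finset.mem_filter.mpr ⟨hu, ReachIn.refl hu⟩
      have hwD : w ∉ D := fun hwD => hnr (Finset.mem_filter.mp hwD).2
      have h1 : insert v D ⊂ A := by
        refine Finset.ssubset_iff_of_subset ?_ |>.mpr ⟨w, (Finset.mem_erase.mp hw).2, ?_⟩
        · intro z hz
          rcases Finset.mem_insert.mp hz with rfl | hz'
          · exact hv
          · exact (Finset.erase_subset _ _) (hDsub hz')
        · intro hwin
          rcases Finset.mem_insert.mp hwin with rfl | h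
          · exact (Finset.mem_erase.mp hw).1 rfl
          · exact hwD h
      have h2 : A \ D ⊂ A := by
        refine Finset.ssubset_iff_of_subset (Finset.sdiff_subset) |>.mpr ⟨u, (Finset.erase_subset _ _) (hDsub huD), ?_⟩
        intro hin
        exact (Finset.mem_sdiff.mp hin).2 huD
      obtain ⟨f₁, hf₁⟩ := ih _ h1
      obtain ⟨f₂, hf₂⟩ := ih _ h2
      set f₂' : V → Fin k := (Equiv.swap (f₂ v) (f₁ v)) ∘ f₂ with hf₂'def
      have hf₂'prop : ProperOn G (A \ D) f₂' := by
        intro p hp q hq hadj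
        simp only [hf₂'def, Function.comp_apply]
        intro heq
        exact hf₂ p hp q hq hadj ((Equiv.swap (f₂ v) (f₁ v)).injective heq)
      have hf₂'v : f₂' v = f₁ v := by
        simp [hf₂'def, Equiv.swap_apply_left]
      have hvD : v ∉ D := fun h => (Finset.mem_erase.mp (hDsub h)).1 rfl
      refine ⟨fun z => if z ∈ insert v D then f₁ z else f₂' z, ?_⟩
      intro p hp q hq hadj
      have hclosed : ∀ s ∈ D, ∀ z ∈ A, G.Adj s z → z = v ∨ z ∈ D := by
        intro s hs z hz hadj'
        rcases eq_or_ne z v with rfl | hzv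
        · exact Or.inl rfl
        · refine Or.inr (Finset.mem_filter.mpr ⟨Finset.mem_erase.mpr ⟨hzv, hz⟩, ?_⟩)
          exact ((Finset.mem_filter.mp hs).2).adj_right hadj' (Finset.mem_erase.mpr ⟨hzv, hz⟩)
      by_cases hp1 : p ∈ insert v D <;> by_cases hq1 : q ∈ insert v D
      · simp only [if_pos hp1, if_pos hq1]
        exact hf₁ p hp1 q hq1 hadj
      · -- p in lobe, q outside
        simp only [if_pos hp1, if_neg hq1]
        rcases Finset.mem_insert.mp hp1 with rfl | hpD
        · have hqAD : q ∈ A \ D := Finset.mem_sdiff.mpr ⟨hq, fun h => hq1 (Finset.mem_insert_of_mem h)⟩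
          have hvAD : p ∈ A \ D := Finset.mem_sdiff.mpr ⟨hp, hvD⟩
          rw [← hf₂'v]
          exact hf₂'prop p hvAD q hqAD hadj
        · exfalso
          rcases hclosed p hpD q hq hadj with rfl | h
          · exact hq1 (Finset.mem_insert_self _ _)
          · exact hq1 (Finset.mem_insert_of_mem h)
      · -- q in lobe, p outside
        simp only [if_neg hp1, if_pos hq1]
        rcases Finset.mem_insert.mp hq1 with rfl | hqD
        · have hpAD : p ∈ A \ D := Finset.mem_sdiff.mpr ⟨hp, fun h => hp1 (Finset.mem_insert_of_mem h)⟩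
          have hvAD : q ∈ A \ D := Finset.mem_sdiff.mpr ⟨hq, hvD⟩
          rw [← hf₂'v]
          exact hf₂'prop p hpAD q hvAD hadj
        · exfalso
          rcases hclosed q hqD p hp hadj.symm with rfl | h
          · exact hp1 (Finset.mem_insert_self _ _)
          · exact hp1 (Finset.mem_insert_of_mem h)
      · simp only [if_neg hp1, if_neg hq1]
        exact hf₂'prop p (Finset.mem_sdiff.mpr ⟨hp, fun h => hp1 (Finset.mem_insert_of_mem h)⟩)
          q (Finset.mem_sdiff.mpr ⟨hq, fun h => hq1 (Finset.mem_insert_of_mem h)⟩) hadj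
    · -- no cut vertex
      push_neg at hcut
      by_cases hconn2 : ∀ u ∈ (A \ {a, c} : Finset V), ReachIn G (A \ {a, c}) u b
      · -- direct greedy
        have hbB : b ∈ (A \ {a, c} : Finset V) := by
          refine Finset.mem_sdiff.mpr ⟨hb, ?_⟩
          simp only [Finset.mem_insert, Finset.mem_singleton]
          push_neg
          exact ⟨fun h => G.irrefl (h ▸ hab), fun h => G.irrefl (h ▸ hbc)⟩
        obtain ⟨f, _, hf⟩ := greedy (by omega : 1 ≤ k) hdeg hbB hconn2
          (by simp : a ∉ (A \ {a,c} : Finset V)) (by simp : c ∉ (A \ {a,c} : Finset V))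
          hac hnac hab.symm hbc
        have hunion : (A \ {a,c} : Finset V) ∪ {a,c} = A := by
          apply Finset.sdiff_union_of_subset
          intro z hz
          rcases Finset.mem_insert.mp hz with rfl | hz'
          · exact ha
          · rw [Finset.mem_singleton] at hz'; exact hz' ▸ hc
        rw [hunion] at hf
        exact ⟨f, hf⟩
      · push_neg at hconn2
        obtain ⟨u₁, hu₁, hnu₁⟩ := hconn2
        -- seed Sep triple
        have hSep : SepSet G A a c ((A \ {a,c}).filter (fun z => ReachIn G (A \ {a,c}) u₁ z)) := by
          refine ⟨ha, hc, hac, ⟨u₁, Finset.mem_filter.mpr ⟨hu₁, ReachIn.refl hu₁⟩⟩,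
            Finset.filter_subset _ _, ?_, ?_⟩
          · intro heq
            have hbB : b ∈ (A \ {a,c} : Finset V) := by
              refine Finset.mem_sdiff.mpr ⟨hb, ?_⟩
              simp only [Finset.mem_insert, Finset.mem_singleton]
              push_neg
              exact ⟨fun h => G.irrefl (h ▸ hab), fun h => G.irrefl (h ▸ hbc)⟩
            have hbm : b ∈ (A \ {a,c}).filter (fun z => ReachIn G (A \ {a,c}) u₁ z) := by
              rw [heq]; exact hbB
            exact hnu₁ (Finset.mem_filter.mp hbm).2
          · intro s hs z hz hadj
            rcases eq_or_ne z a with rfl | hza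
            · exact Or.inr (Or.inl rfl)
            rcases eq_or_ne z c with rfl | hzc
            · exact Or.inr (Or.inr rfl)
            refine Or.inl (Finset.mem_filter.mpr ⟨Finset.mem_sdiff.mpr ⟨hz, by simp [hza, hzc]⟩, ?_⟩)
            exact ((Finset.mem_filter.mp hs).2).adj_right hadj
              (Finset.mem_sdiff.mpr ⟨hz, by simp [hza, hzc]⟩)
        exact twocut_case hk hdeg hlow hcut hSep
  · -- disconnected: split C and A \ C
    have h1 : C ⊂ A := Finset.ssubset_iff_subset_ne.mpr ⟨hCsub, hCA⟩
    have h2 : A \ C ⊂ A := by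
      refine Finset.ssubset_iff_of_subset Finset.sdiff_subset |>.mpr ⟨v₀, hCsub hv₀C, ?_⟩
      intro h
      exact (Finset.mem_sdiff.mp h).2 hv₀C
    obtain ⟨f₁, hf₁⟩ := ih _ h1
    obtain ⟨f₂, hf₂⟩ := ih _ h2
    refine ⟨fun z => if z ∈ C then f₁ z else f₂ z, ?_⟩
    intro p hp q hq hadj
    have hclosedC : ∀ s ∈ C, ∀ z ∈ A, G.Adj s z → z ∈ C := by
      intro s hs z hz hadj'
      exact Finset.mem_filter.mpr ⟨hz, ((Finset.mem_filter.mp hs).2).adj_right hadj' hz⟩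
    by_cases hp1 : p ∈ C <;> by_cases hq1 : q ∈ C
    · simp only [if_pos hp1, if_pos hq1]; exact hf₁ p hp1 q hq1 hadj
    · exact absurd (hclosedC p hp1 q hq hadj) hq1
    · exact absurd (hclosedC q hq1 p hp hadj.symm) hp1
    · simp only [if_neg hp1, if_neg hq1]
      exact hf₂ p (Finset.mem_sdiff.mpr ⟨hp, hp1⟩) q (Finset.mem_sdiff.mpr ⟨hq, hq1⟩) hadj


end Brooks

/-- The independence number of `G`: the maximum size of a set of pairwise nonadjacent
vertices. -/
def indepNum {V : Type*} [Fintype V] [DecidableEq V] (G : SimpleGraph V)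
    [DecidableRel G.Adj] : ℕ :=
  ((Finset.univ : Finset (Finset V)).filter fun I => ∀ u ∈ I, ∀ v ∈ I, ¬ G.Adj u v).sup
    Finset.card

/-- Brooks' Theorem for Independence Number: if `Δ(G) ≥ 3` and `G` has no clique on
`Δ(G) + 1` vertices, then `Δ(G) · α(G) ≥ |G|`. -/
theorem brooks_independence_number {V : Type*} [Fintype V] [DecidableEq V]
    (G : SimpleGraph V) [DecidableRel G.Adj]
    (hΔ : 3 ≤ G.maxDegree) (hclique : G.CliqueFree (G.maxDegree + 1)) :
    Fintype.card V ≤ G.maxDegree * _root_.indepNum G := by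
    classical
  obtain ⟨f, hf⟩ := brooks_coloring (G := G) hΔ (fun v => G.degree_le_maxDegree v) hclique
    Finset.univ
  have hcard : Fintype.card V =
      ∑ i : Fin G.maxDegree, (Finset.univ.filter (fun v => f v = i)).card := by
    rw [← Finset.card_univ]
    exact Finset.card_eq_sum_card_fiberwise (fun x _ => Finset.mem_univ (f x))
  have hclass : ∀ i : Fin G.maxDegree,
      (Finset.univ.filter (fun v => f v = i)).card ≤ _root_.indepNum G := by
    intro i
    apply Finset.le_sup
    rw [Finset.mem_filter]
    refine ⟨Finset.mem_univ _, ?_⟩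
    intro u hu v hv hadj
    have h1 := (Finset.mem_filter.mp hu).2
    have h2 := (Finset.mem_filter.mp hv).2
    exact hf u (Finset.mem_univ u) v (Finset.mem_univ v) hadj (by rw [h1, h2])
  calc Fintype.card V = ∑ i : Fin G.maxDegree, (Finset.univ.filter (fun v => f v = i)).card :=
        hcard
    _ ≤ ∑ _i : Fin G.maxDegree, _root_.indepNum G := Finset.sum_le_sum (fun i _ => hclass i)
    _ = G.maxDegree * _root_.indepNum G := by
        rw [Finset.sum_const, Finset.card_univ, Fintype.card_fin, smul_eq_mul]
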